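/- Let M be a p×q pattern matrix with p ≤ q, and consider the directed graph G(M) with each node colored white or black. Let D ∈ ℝ^{p×p} be the diagonal matrix with D_kk = 1 if node k is black and D_kk = 0 otherwise. Suppose j ∈ {1,...,p} is a node for which there exists a node i ∈ {1,...,p} (possibly i = j) such that j is the only white out-neighbor of i and (i,j) ∈ E_∗. Then for every real matrix M ∈ P(M), the matrix [M D] has full row rank if and only if the matrix [M (D + e_j e_j^T)] has full row rank, where e_j denotes the j-th standard basis column vector. -/

import Mathlib

/-- The symbols of a pattern matrix: fixed zero (`0`), arbitrary nonzero (`∗`),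
and arbitrary (`?`). -/
inductive PSym : Type
  | zero
  | star
  | arb
  deriving DecidableEq

open Matrix

/-- The pattern class of a pattern matrix: real matrices that are `0` where the pattern
is `0`, nonzero where the pattern is `∗`, and unrestricted where the pattern is `?`. -/
def PatternClass {R C : Type*} (M : Matrix R C PSym) : Set (Matrix R C ℝ) :=
  {A | ∀ i j, (M i j = PSym.zero → A i j = 0) ∧ (M i j = PSym.star → A i j ≠ 0)}

/-- A pattern matrix has full row rank if every member of its pattern class
has full row rank. -/
def PatternFullRowRank {R C : Type*} [Fintype R] [Fintype C] (M : Matrix R C PSym) : Prop :=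
  ∀ A ∈ PatternClass M, A.rank = Fintype.card R

/-- Hautus test: `(A, B)` is controllable iff `[A - λI, B]` has rank `n` for all `λ ∈ ℂ`. -/
def Controllable {n m : ℕ} (A : Matrix (Fin n) (Fin n) ℝ) (B : Matrix (Fin n) (Fin m) ℝ) : Prop :=
  ∀ l : ℂ, (Matrix.fromCols (A.map (Complex.ofReal) - l • (1 : Matrix (Fin n) (Fin n) ℂ))
      (B.map (Complex.ofReal))).rank = n

/-- Hautus test for stabilizability: `[A - λI, B]` has rank `n` for all `λ` with `Re λ ≥ 0`. -/
def Stabilizable {n m : ℕ} (A : Matrix (Fin n) (Fin n) ℝ) (B : Matrix (Fin n) (Fin m) ℝ) : Prop :=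
  ∀ l : ℂ, 0 ≤ l.re →
    (Matrix.fromCols (A.map (Complex.ofReal) - l • (1 : Matrix (Fin n) (Fin n) ℂ))
      (B.map (Complex.ofReal))).rank = n

/-- Strong structural controllability of the structured system `(𝒜, ℬ)`. -/
def StrStrControllable {n m : ℕ} (𝒜 : Matrix (Fin n) (Fin n) PSym)
    (ℬ : Matrix (Fin n) (Fin m) PSym) : Prop :=
  ∀ A ∈ PatternClass 𝒜, ∀ B ∈ PatternClass ℬ, Controllable A B

/-- Strong structural stabilizability of the structured system `(𝒜, ℬ)`. -/
def StrStrStabilizable {n m : ℕ} (𝒜 : Matrix (Fin n) (Fin n) PSym)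
    (ℬ : Matrix (Fin n) (Fin m) PSym) : Prop :=
  ∀ A ∈ PatternClass 𝒜, ∀ B ∈ PatternClass ℬ, Stabilizable A B

/-- The pattern matrix `Ā` obtained from `𝒜` by replacing each diagonal entry by `∗`
if it is `0` and by `?` otherwise, keeping all off-diagonal entries. -/
def barPattern {n : ℕ} (𝒜 : Matrix (Fin n) (Fin n) PSym) : Matrix (Fin n) (Fin n) PSym :=
  fun i j => if i = j then (if 𝒜 i i = PSym.zero then PSym.star else PSym.arb) else 𝒜 i j

/-- The sets of black nodes obtainable in `G(M)` by repeatedly applying the color change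
rule, starting from the all-white coloring. The colorable nodes are the rows of `M`;
every node of `G(M)` corresponds to a column `c`, whose out-neighbors are the rows `k`
with `M k c ≠ 0`, and the edge from `c` to `k` is in `E_∗` iff `M k c = ∗`. A step colors
`j` black when some node `c` has `j` as its only white out-neighbor and `(c, j) ∈ E_∗`. -/
inductive ColorStep {R C : Type*} (M : Matrix R C PSym) : Set R → Prop
  | init : ColorStep M ∅
  | step (S : Set R) (c : C) (j : R)
      (hS : ColorStep M S)
      (hstar : M j c = PSym.star)
      (hwhite : j ∉ S)
      (huniq : ∀ k : R, M k c ≠ PSym.zero → k ∉ S → k = j) :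
      ColorStep M (insert j S)

/-- `G(M)` is colorable if all row-nodes can be colored black by repeated application
of the color change rule. -/
def PatternColorable {R C : Type*} (M : Matrix R C PSym) : Prop :=
  ColorStep M Set.univ

lemma rank_eq_card_iff_vecMul {m n : Type*} [Fintype m] [Fintype n]
    (A : Matrix m n ℝ) :
    A.rank = Fintype.card m ↔ ∀ x : m → ℝ, x ᵥ* A = 0 → x = 0 := by
  have hv : ∀ x : m → ℝ, x ᵥ* A = ∑ i, x i • A i := by
    intro x
    ext j
    simp [Matrix.vecMul, dotProduct, Finset.sum_apply]
  rw [Matrix.rank_eq_finrank_span_row, eq_comm,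
    ← Set.finrank, ← linearIndependent_iff_card_eq_finrank_span,
    Fintype.linearIndependent_iff]
  constructor
  · intro h x hx
    funext i
    exact h x (by have := hv x; rw [hx] at this; exact this.symm) i
  · intro h g hg i
    exact congrFun (h g (by rw [hv]; exact hg)) i

/-- **Lemma 2.** Given a black/white coloring of the nodes (rows) of `G(ℳ)`, let `D` be
the diagonal matrix with `D_kk = 1` iff node `k` is black. If node `j ∈ {1,...,p}` is
the only white out-neighbor of some node `i ∈ {1,...,p}` (possibly `i = j`) and
`(i, j) ∈ E_∗`, then for every `M ∈ P(ℳ)`, `[M D]` has full row rank iff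
`[M (D + eⱼeⱼᵀ)]` has full row rank. -/
theorem rank_insert_black_node {p q : ℕ} (hpq : p ≤ q) (ℳ : Matrix (Fin p) (Fin q) PSym)
    (black : Fin p → Bool)
    (D : Matrix (Fin p) (Fin p) ℝ)
    (hD : D = Matrix.diagonal (fun k => if black k then (1 : ℝ) else 0))
    (j i : Fin p)
    (hstar : ℳ j (Fin.castLE hpq i) = PSym.star)
    (hjwhite : black j = false)
    (honly : ∀ k : Fin p, ℳ k (Fin.castLE hpq i) ≠ PSym.zero → black k = false → k = j) :
    ∀ M ∈ PatternClass ℳ,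
      ((Matrix.fromCols M D).rank = p ↔
        (Matrix.fromCols M (D + Matrix.single j j (1 : ℝ))).rank = p) := by
  intro M hM
  set E := Matrix.single j j (1 : ℝ) with hE
  set d : Fin p → ℝ := fun k => if black k then (1 : ℝ) else 0 with hd
  -- compute vecMul against D and E
  have hvD : ∀ (x : Fin p → ℝ) (k : Fin p), (x ᵥ* D) k = x k * d k := by
    intro x k
    rw [hD]
    simp [Matrix.vecMul_diagonal]
  have hvE : ∀ (x : Fin p → ℝ) (k : Fin p),
      (x ᵥ* E) k = if k = j then x j else 0 := by
    intro x k
    simp only [hE, Matrix.vecMul, dotProduct, Matrix.single,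
      mul_ite, mul_one, mul_zero]
    by_cases h : k = j
    · subst h; simp
    · have h' : j ≠ k := fun hh => h hh.symm
      simp [h, h']
  -- key: if x ᵥ* M = 0 and x vanishes on black nodes, then x j = 0
  have key : ∀ x : Fin p → ℝ, x ᵥ* M = 0 →
      (∀ k, black k = true → x k = 0) → x j = 0 := by
    intro x hxM hblack
    have h0 : (x ᵥ* M) (Fin.castLE hpq i) = 0 := by rw [hxM]; rfl
    have hsum : ∑ k, x k * M k (Fin.castLE hpq i) = 0 := h0
    have hMj : M j (Fin.castLE hpq i) ≠ 0 := (hM j (Fin.castLE hpq i)).2 hstar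
    have : x j * M j (Fin.castLE hpq i) = 0 := by
      rw [← hsum]
      refine (Finset.sum_eq_single j ?_ (fun h => absurd (Finset.mem_univ j) h) :
        ∑ k, x k * M k (Fin.castLE hpq i) = _).symm
      intro k _ hkj
      by_cases hb : black k = true
      · rw [hblack k hb, zero_mul]
      · have hbf : black k = false := by
          cases hbb : black k
          · rfl
          · exact absurd hbb hb
        have : ℳ k (Fin.castLE hpq i) = PSym.zero := by
          by_contra hne
          exact hkj (honly k hne hbf)
        rw [(hM k (Fin.castLE hpq i)).1 this, mul_zero]
    exact (mul_eq_zero.mp this).resolve_right hMj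
  have hrk : ∀ (B : Matrix (Fin p) (Fin p) ℝ),
      (Matrix.fromCols M B).rank = p ↔
        ∀ x : Fin p → ℝ, x ᵥ* Matrix.fromCols M B = 0 → x = 0 := fun B => by
    simpa using rank_eq_card_iff_vecMul (Matrix.fromCols M B)
  rw [hrk, hrk]
  have hsplit : ∀ (B : Matrix (Fin p) (Fin p) ℝ) (x : Fin p → ℝ),
      x ᵥ* Matrix.fromCols M B = 0 ↔ x ᵥ* M = 0 ∧ x ᵥ* B = 0 := by
    intro B x
    rw [Matrix.vecMul_fromCols]
    constructor
    · intro h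
      constructor
      · funext c; exact congrFun h (Sum.inl c)
      · funext c; exact congrFun h (Sum.inr c)
    · rintro ⟨h1, h2⟩
      funext c
      cases c with
      | inl c => exact congrFun h1 c
      | inr c => exact congrFun h2 c
  constructor
  · intro H x hx
    rw [hsplit] at hx
    obtain ⟨hxM, hxDE⟩ := hx
    have hxDE' : ∀ k, x k * d k + (if k = j then x j else 0) = 0 := by
      intro k
      have := congrFun hxDE k
      rwa [Matrix.vecMul_add, Pi.add_apply, hvD, hvE, Pi.zero_apply] at this
    have hblack : ∀ k, black k = true → x k = 0 := by
      intro k hk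
      have hkj : k ≠ j := by
        intro h; rw [h] at hk; rw [hjwhite] at hk; exact Bool.noConfusion hk
      have := hxDE' k
      rw [if_neg hkj, add_zero, hd] at this
      simpa [hk] using this
    have hxD : x ᵥ* D = 0 := by
      funext k
      rw [hvD, hd, Pi.zero_apply]
      by_cases hb : black k = true
      · rw [hblack k hb, zero_mul]
      · simp only [hb, if_false, mul_zero]
        simp [Bool.not_eq_true] at hb
        simp [hb]
    exact H x ((hsplit D x).mpr ⟨hxM, hxD⟩)
  · intro H x hx
    rw [hsplit] at hx
    obtain ⟨hxM, hxD⟩ := hx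
    have hblack : ∀ k, black k = true → x k = 0 := by
      intro k hk
      have := congrFun hxD k
      rw [hvD, hd, Pi.zero_apply] at this
      simpa [hk] using this
    have hxj : x j = 0 := key x hxM hblack
    have hxDE : x ᵥ* (D + E) = 0 := by
      funext k
      rw [Matrix.vecMul_add, Pi.add_apply, hvD, hvE, Pi.zero_apply]
      have hDk : x k * d k = 0 := by
        have := congrFun hxD k
        rwa [hvD, Pi.zero_apply] at this
      rw [hDk, zero_add]
      by_cases h : k = j
      · rw [if_pos h, hxj]
      · rw [if_neg h]
    exact H x ((hsplit (D + E) x).mpr ⟨hxM, hxDE⟩)
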